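/- If K > 0, then sup_{s∈[0,T]} A(s) = A(s₀) with s₀ = (1/(2K))log(2e^{KT}-1), and this supremum equals (1/(2K²))·[2 - (2 - e^{-KT})/√(2e^{KT}-1) - e^{-KT}·√(2e^{KT}-1)]. -/

import Mathlib

open Real

theorem A_sup_K_pos (K T : ℝ) (hK : 0 < K) (hT : 0 < T)
    (A : ℝ → ℝ)
    (hA : ∀ s, A s = (1 / (2 * K ^ 2)) * (2 - 2 * exp (-K * s) + exp (-K * (T + s))
        - exp (-K * (T - s)))) :
    IsGreatest (A '' Set.Icc 0 T) (A ((1 / (2 * K)) * Real.log (2 * exp (K * T) - 1)))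
    ∧ A ((1 / (2 * K)) * Real.log (2 * exp (K * T) - 1))
      = (1 / (2 * K ^ 2)) * (2 - (2 - exp (-K * T)) / Real.sqrt (2 * exp (K * T) - 1)
          - exp (-K * T) * Real.sqrt (2 * exp (K * T) - 1)) := by
  have hK0 : K ≠ 0 := ne_of_gt hK
  set a := exp (-K * T) with ha
  set L := 2 * exp (K * T) - 1 with hL
  have hKT : 0 < K * T := mul_pos hK hT
  have hL1 : 1 < L := by
    have h1 : 1 < exp (K * T) := by
      rw [← Real.exp_zero]; exact Real.exp_lt_exp.mpr hKT
    simp only [hL]; nlinarith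
  have hLpos : 0 < L := by linarith
  set r := Real.sqrt L with hr
  have hrpos : 0 < r := Real.sqrt_pos.mpr hLpos
  have hrne : r ≠ 0 := hrpos.ne'
  have hr2 : r ^ 2 = L := Real.sq_sqrt hLpos.le
  have hapos : 0 < a := Real.exp_pos _
  have haL : a * L = 2 - a := by
    have h1 : a * exp (K * T) = 1 := by
      rw [ha, ← Real.exp_add]; ring_nf; exact Real.exp_zero
    simp only [hL]; nlinarith
  set s₀ := (1 / (2 * K)) * Real.log L with hs₀
  have hexp : exp (K * s₀) = r := by
    have h : K * s₀ = Real.log L / 2 := by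
      rw [hs₀]; field_simp
    rw [h, Real.exp_half, Real.exp_log hLpos]
  have hexpneg : exp (-K * s₀) = r⁻¹ := by
    rw [neg_mul, Real.exp_neg, hexp]
  -- value of A at any s, in terms of x = exp (-K * s)
  have hval : ∀ s : ℝ, A s = (1 / (2 * K ^ 2)) *
      (2 - 2 * exp (-K * s) + a * exp (-K * s) - a * (exp (-K * s))⁻¹) := by
    intro s
    rw [hA s]
    have h1 : exp (-K * (T + s)) = a * exp (-K * s) := by
      rw [ha, ← Real.exp_add]; ring_nf
    have h2 : exp (-K * (T - s)) = a * (exp (-K * s))⁻¹ := by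
      rw [ha, ← Real.exp_neg, ← Real.exp_add]; ring_nf
    rw [h1, h2]
  -- key inequality
  have key : ∀ x : ℝ, 0 < x →
      2 - 2 * x + a * x - a * x⁻¹ ≤ 2 - 2 * r⁻¹ + a * r⁻¹ - a * r := by
    intro x hx
    have hxne : x ≠ 0 := hx.ne'
    have h1 : a * r ^ 2 * x + a * x⁻¹ - 2 * a * r = x⁻¹ * (a * (r * x - 1) ^ 2) := by
      field_simp; ring
    have h2 : 0 ≤ x⁻¹ * (a * (r * x - 1) ^ 2) := by positivity
    have h3 : 2 - 2 * r⁻¹ + a * r⁻¹ - a * r = 2 - 2 * a * r := by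
      have h4 : r * r⁻¹ = 1 := mul_inv_cancel₀ hrne
      nlinarith [hr2, haL]
    have h5 : 2 - a = a * r ^ 2 := by rw [hr2]; linarith
    rw [h3]
    nlinarith
  have hmem : s₀ ∈ Set.Icc 0 T := by
    constructor
    · have : 0 ≤ Real.log L := Real.log_nonneg hL1.le
      positivity
    · have hle : L ≤ exp (2 * (K * T)) := by
        have := Real.exp_pos (K * T)
        rw [two_mul, Real.exp_add]
        simp only [hL]; nlinarith
      have := Real.log_le_log hLpos hle
      rw [Real.log_exp] at this
      rw [hs₀]
      rw [div_mul_eq_mul_div, one_mul, div_le_iff₀ (by positivity)]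
      linarith [this]
  constructor
  · constructor
    · exact ⟨s₀, hmem, rfl⟩
    · rintro y ⟨s, hs, rfl⟩
      rw [hval s, hval s₀, hexpneg, inv_inv]
      have hxpos : 0 < exp (-K * s) := Real.exp_pos _
      have := key _ hxpos
      have hc : 0 < 1 / (2 * K ^ 2) := by positivity
      exact mul_le_mul_of_nonneg_left this hc.le
  · rw [hval s₀, hexpneg]
    rw [inv_inv]
    have : 2 - 2 * r⁻¹ + a * r⁻¹ - a * r = 2 - (2 - a) / r - a * r := by
      field_simp; ring
    rw [this]
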